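/- (Affine distance is a metric on the past light cone.) Let u be an observer in Minkowski space and let C⁻ = {x ∈ ℝ⁴ : x ≠ 0, g(x,x) = 0, x⁰ < 0} be the past light cone of the origin minus its vertex. Define d_u(x,x′) = √(g(π_{u^⊥}(x − x′), π_{u^⊥}(x − x′))) for x, x′ ∈ C⁻. Then d_u is a metric on C⁻: it is symmetric, satisfies the triangle inequality d_u(x,x″) ≤ d_u(x,x′) + d_u(x′,x″), and is positive-definite, i.e., d_u(x,x′) = 0 if and only if x = x′. -/

import Mathlib

noncomputable section

/-- The Minkowski bilinear form on ℝ⁴ (signature (−,+,+,+)). -/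
def g (x y : Fin 4 → ℝ) : ℝ :=
  -(x 0 * y 0) + x 1 * y 1 + x 2 * y 2 + x 3 * y 3

/-- An observer: a future-pointing timelike unit vector. -/
def IsObserver (u : Fin 4 → ℝ) : Prop := g u u = -1 ∧ 0 < u 0

/-- The g-orthogonal projection of `x` onto `u^⊥`. -/
def proj (u x : Fin 4 → ℝ) : Fin 4 → ℝ := x + g x u • u

/-- The past light cone of the origin, minus its vertex. -/
def pastCone : Set (Fin 4 → ℝ) := {x | x ≠ 0 ∧ g x x = 0 ∧ x 0 < 0}

/-- The affine distance between two observed events, as seen by `u`. -/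
def affDist (u x x' : Fin 4 → ℝ) : ℝ :=
  Real.sqrt (g (proj u (x - x')) (proj u (x - x')))

/- ---------- auxiliary lemmas ---------- -/

lemma g_expand (u v : Fin 4 → ℝ) (hg : g u u = -1) :
    g (proj u v) (proj u v) = g v v + g v u ^ 2 := by
  simp only [proj, g, Pi.add_apply, Pi.smul_apply, smul_eq_mul] at *
  linear_combination ((-(v 0 * u 0) + v 1 * u 1 + v 2 * u 2 + v 3 * u 3)^2) * hg

lemma proj_ortho (u v : Fin 4 → ℝ) (hg : g u u = -1) :
    g (proj u v) u = 0 := by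
  simp only [proj, g, Pi.add_apply, Pi.smul_apply, smul_eq_mul] at *
  linear_combination ((-(v 0 * u 0) + v 1 * u 1 + v 2 * u 2 + v 3 * u 3)) * hg

lemma ortho_pos (u w : Fin 4 → ℝ) (hg : g u u = -1) (hw : g w u = 0) :
    (w 1)^2 + (w 2)^2 + (w 3)^2 ≤ (u 0)^2 * g w w := by
  simp only [g] at *
  have hS : w 0 * u 0 = w 1 * u 1 + w 2 * u 2 + w 3 * u 3 := by linarith
  have hS2 : (w 0 * u 0)^2 = (w 1 * u 1 + w 2 * u 2 + w 3 * u 3)^2 := by rw [hS]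
  nlinarith [sq_nonneg (w 1 * u 2 - w 2 * u 1), sq_nonneg (w 1 * u 3 - w 3 * u 1),
    sq_nonneg (w 2 * u 3 - w 3 * u 2), hS2, hg]

lemma B_nonneg (u v : Fin 4 → ℝ) (hg : g u u = -1) (hu0 : 0 < u 0) :
    0 ≤ g v v + g v u ^ 2 := by
  rw [← g_expand u v hg]
  have h1 := ortho_pos u (proj u v) hg (proj_ortho u v hg)
  nlinarith [sq_nonneg (proj u v 1), sq_nonneg (proj u v 2), sq_nonneg (proj u v 3),
    mul_pos hu0 hu0]

lemma B_expand (u v w : Fin 4 → ℝ) (s t : ℝ) :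
    g (s • v + t • w) (s • v + t • w) + g (s • v + t • w) u ^ 2 =
      (g v v + g v u ^ 2) * s ^ 2 + 2 * (g v w + g v u * g w u) * s * t +
      (g w w + g w u ^ 2) * t ^ 2 := by
  simp only [g, Pi.add_apply, Pi.smul_apply, smul_eq_mul]
  ring

lemma cs_aux {a b c : ℝ} (h : ∀ s t : ℝ, 0 ≤ a*s^2 + 2*c*s*t + b*t^2) : c^2 ≤ a*b := by
  have ha : 0 ≤ a := by have := h 1 0; linarith
  have hb : 0 ≤ b := by have := h 0 1; linarith
  rcases eq_or_lt_of_le hb with hb0 | hb0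
  · have hc : c = 0 := by
      by_contra hc
      have h2 := h 1 (-(a+1)/(2*c))
      rw [← hb0] at h2
      field_simp at h2
      have hc2 : 0 < c ^ 2 := lt_of_le_of_ne (sq_nonneg c) (Ne.symm (pow_ne_zero 2 hc))
      rw [le_div_iff₀ hc2] at h2
      nlinarith [sq_nonneg c, h2]
    rw [hc, ← hb0]; ring_nf; positivity
  · nlinarith [h b (-c)]

lemma B_cs (u v w : Fin 4 → ℝ) (hg : g u u = -1) (hu0 : 0 < u 0) :
    (g v w + g v u * g w u)^2 ≤ (g v v + g v u ^ 2) * (g w w + g w u ^ 2) := by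
  apply cs_aux
  intro s t
  have := B_nonneg u (s • v + t • w) hg hu0
  rw [B_expand u v w s t] at this
  linarith

lemma gxu_pos (u x : Fin 4 → ℝ) (hg : g u u = -1) (hu0 : 0 < u 0)
    (hnull : g x x = 0) (hx0 : x 0 < 0) : 0 < g x u := by
  simp only [g] at *
  nlinarith [sq_nonneg (x 1 * u 2 - x 2 * u 1), sq_nonneg (x 1 * u 3 - x 3 * u 1),
    sq_nonneg (x 2 * u 3 - x 3 * u 2), mul_pos (neg_pos.mpr hx0) hu0,
    sq_nonneg (-(x 0 * u 0) + x 1 * u 1 + x 2 * u 2 + x 3 * u 3),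
    sq_nonneg (x 0 * u 0 + x 1 * u 1 + x 2 * u 2 + x 3 * u 3)]

lemma affDist_eq (u x x' : Fin 4 → ℝ) (hg : g u u = -1) :
    affDist u x x' = Real.sqrt (g (x - x') (x - x') + g (x - x') u ^ 2) := by
  rw [affDist, g_expand u (x - x') hg]

/-- Affine distance is a metric on the past light cone: symmetric, triangle
inequality, and positive-definite. -/
theorem affine_distance_is_metric (u : Fin 4 → ℝ) (hu : IsObserver u) :
    (∀ x ∈ pastCone, ∀ x' ∈ pastCone, affDist u x x' = affDist u x' x) ∧
    (∀ x ∈ pastCone, ∀ x' ∈ pastCone, ∀ x'' ∈ pastCone,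
      affDist u x x'' ≤ affDist u x x' + affDist u x' x'') ∧
    (∀ x ∈ pastCone, ∀ x' ∈ pastCone, (affDist u x x' = 0 ↔ x = x')) := by
  obtain ⟨hg, hu0⟩ := hu
  refine ⟨?_, ?_, ?_⟩
  · -- symmetry
    intro x _ x' _
    unfold affDist
    congr 1
    simp only [proj, g, Pi.add_apply, Pi.sub_apply, Pi.smul_apply, smul_eq_mul]
    ring
  · -- triangle inequality
    intro x _ x' _ x'' _
    rw [affDist_eq u x x'' hg, affDist_eq u x x' hg, affDist_eq u x' x'' hg]
    set v := x - x' with hv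
    set w := x' - x'' with hw
    have hvw : x - x'' = v + w := by rw [hv, hw]; abel
    rw [hvw]
    set a := g v v + g v u ^ 2 with hA
    set b := g w w + g w u ^ 2 with hB
    set c := g v w + g v u * g w u with hC
    have ha : 0 ≤ a := B_nonneg u v hg hu0
    have hb : 0 ≤ b := B_nonneg u w hg hu0
    have hcs : c ^ 2 ≤ a * b := B_cs u v w hg hu0
    have hsum : g (v + w) (v + w) + g (v + w) u ^ 2 = a + 2 * c + b := by
      have := B_expand u v w 1 1
      simp only [one_smul, one_pow, mul_one] at this
      rw [hA, hB, hC]; linarith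
    rw [hsum]
    have hcle : c ≤ Real.sqrt a * Real.sqrt b := by
      calc c ≤ |c| := le_abs_self c
        _ = Real.sqrt (c ^ 2) := (Real.sqrt_sq_eq_abs c).symm
        _ ≤ Real.sqrt (a * b) := Real.sqrt_le_sqrt hcs
        _ = Real.sqrt a * Real.sqrt b := Real.sqrt_mul ha b
    have h2 : a + 2 * c + b ≤ (Real.sqrt a + Real.sqrt b) ^ 2 := by
      have hsa : Real.sqrt a ^ 2 = a := Real.sq_sqrt ha
      have hsb : Real.sqrt b ^ 2 = b := Real.sq_sqrt hb
      nlinarith [hcle]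
    calc Real.sqrt (a + 2 * c + b) ≤ Real.sqrt ((Real.sqrt a + Real.sqrt b) ^ 2) :=
          Real.sqrt_le_sqrt h2
      _ = Real.sqrt a + Real.sqrt b := by
          rw [Real.sqrt_sq (by positivity)]
  · -- positive definiteness
    intro x hx x' hx'
    constructor
    · intro h
      rw [affDist] at h
      have hBv : g (proj u (x - x')) (proj u (x - x')) = 0 := by
        have hnn : 0 ≤ g (proj u (x - x')) (proj u (x - x')) := by
          rw [g_expand u (x - x') hg]
          exact B_nonneg u (x - x') hg hu0
        rcases eq_or_lt_of_le hnn with h0 | h0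
        · exact h0.symm
        · exact absurd h (by positivity)
      set w := proj u (x - x') with hwdef
      have hw : g w u = 0 := proj_ortho u (x - x') hg
      have hpos := ortho_pos u w hg hw
      rw [hBv] at hpos
      have h1 : w 1 = 0 := by nlinarith [sq_nonneg (w 1), sq_nonneg (w 2), sq_nonneg (w 3)]
      have h2 : w 2 = 0 := by nlinarith [sq_nonneg (w 1), sq_nonneg (w 2), sq_nonneg (w 3)]
      have h3 : w 3 = 0 := by nlinarith [sq_nonneg (w 1), sq_nonneg (w 2), sq_nonneg (w 3)]
      have h0 : w 0 = 0 := by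
        simp only [g] at hw
        rw [h1, h2, h3] at hw
        have : w 0 * u 0 = 0 := by linarith
        rcases mul_eq_zero.mp this with h | h
        · exact h
        · exact absurd h (ne_of_gt hu0)
      -- so proj u (x - x') = 0, hence x - x' = t • u with t = -(g (x-x') u)
      set t : ℝ := -(g (x - x') u) with ht
      have hcoord : ∀ i, x i = x' i + t * u i := by
        intro i
        have hwz : w i = 0 := by fin_cases i <;> assumption
        simp only [hwdef, proj, Pi.add_apply, Pi.smul_apply, smul_eq_mul, Pi.sub_apply] at hwz
        have : x i - x' i + g (x - x') u * u i = 0 := hwz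
        rw [ht]; linarith
      obtain ⟨_, hxx, hx0⟩ := hx
      obtain ⟨_, hx'x', hx'0⟩ := hx'
      have hgxu : 0 < g x u := gxu_pos u x hg hu0 hxx hx0
      have hgx'u : 0 < g x' u := gxu_pos u x' hg hu0 hx'x' hx'0
      have hgx : g x x = g x' x' + 2 * t * g x' u + t ^ 2 * g u u := by
        simp only [g]
        rw [hcoord 0, hcoord 1, hcoord 2, hcoord 3]
        ring
      have hcoord' : ∀ i, x' i = x i - t * u i := fun i => by rw [hcoord i]; ring
      have hgx'eq : g x' x' = g x x - 2 * t * g x u + t ^ 2 * g u u := by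
        simp only [g]
        rw [hcoord' 0, hcoord' 1, hcoord' 2, hcoord' 3]
        ring
      have hE1 : 2 * t * g x' u - t ^ 2 = 0 := by
        rw [hxx, hx'x', hg] at hgx; linarith
      have hE2 : -(2 * t * g x u) - t ^ 2 = 0 := by
        rw [hxx, hx'x', hg] at hgx'eq; linarith
      have hprod : t * (g x' u + g x u) = 0 := by linear_combination (hE1 - hE2) / 2
      have ht0 : t = 0 := by
        rcases mul_eq_zero.mp hprod with h' | h'
        · exact h'
        · linarith
      funext i
      rw [hcoord i, ht0]; ring
    · intro h
      rw [h, affDist]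
      simp only [sub_self]
      have : proj u (0 : Fin 4 → ℝ) = 0 := by
        funext i
        simp [proj, g]
      rw [this]
      simp [g]
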